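/- Let {ψᵢ¹ ⊗ ψᵢ² ⊗ ⋯ ⊗ ψᵢⁿ : i = 1…d} be an orthonormal product basis of ℂ^{d₁} ⊗ ⋯ ⊗ ℂ^{d_n}, d = d₁d₂⋯d_n, and let μ¹ ∈ ℂ^{d₁}, …, μⁿ ∈ ℂ^{d_n} be unit vectors. Then the product state μ¹ ⊗ ⋯ ⊗ μⁿ is mutually unbiased to the basis (i.e. |⟨ψᵢ¹ ⊗ ⋯ ⊗ ψᵢⁿ, μ¹ ⊗ ⋯ ⊗ μⁿ⟩|² = 1/d for all i) if and only if for each r = 1…n and each i = 1…d, |⟨ψᵢʳ, μʳ⟩|² = 1/d_r. -/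

import Mathlib

open scoped ComplexInnerProductSpace

/-- The tensor product `ψ¹ ⊗ ⋯ ⊗ ψⁿ` of `n` vectors, realized concretely on
`EuclideanSpace`: its component at the multi-index `f` is `∏ r, ψ r (f r)`. -/
noncomputable def eprodPi {n : ℕ} {D : Fin n → ℕ}
    (ψ : (r : Fin n) → EuclideanSpace ℂ (Fin (D r))) :
    EuclideanSpace ℂ ((r : Fin n) → Fin (D r)) :=
  WithLp.toLp 2 (fun f => ∏ r, ψ r (f r))

lemma inner_eprodPi {n : ℕ} {D : Fin n → ℕ}
    (ψ φ : (r : Fin n) → EuclideanSpace ℂ (Fin (D r))) :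
    ⟪eprodPi ψ, eprodPi φ⟫ = ∏ r, ⟪ψ r, φ r⟫ := by
  simp only [PiLp.inner_apply, RCLike.inner_apply, eprodPi, PiLp.toLp_apply, map_prod]
  rw [Fintype.prod_sum]
  exact Finset.sum_congr rfl fun f _ => (Finset.prod_mul_distrib).symm

lemma norm_inner_eprodPi_sq {n : ℕ} {D : Fin n → ℕ}
    (ψ φ : (r : Fin n) → EuclideanSpace ℂ (Fin (D r))) :
    ‖⟪eprodPi ψ, eprodPi φ⟫‖ ^ 2 = ∏ r, ‖⟪ψ r, φ r⟫‖ ^ 2 := by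
  rw [inner_eprodPi, norm_prod, ← Finset.prod_pow]

lemma norm_eprodPi_sq {n : ℕ} {D : Fin n → ℕ}
    (ψ : (r : Fin n) → EuclideanSpace ℂ (Fin (D r))) :
    ‖eprodPi ψ‖ ^ 2 = ∏ r, ‖ψ r‖ ^ 2 := by
  have h := inner_eprodPi ψ ψ
  simp only [inner_self_eq_norm_sq_to_K] at h
  exact_mod_cast h

lemma parseval_aux {ι : Type*} [Fintype ι] [Nonempty ι] {E : Type*} [NormedAddCommGroup E]
    [InnerProductSpace ℂ E] [FiniteDimensional ℂ E]
    (h : Fintype.card ι = Module.finrank ℂ E) (Ψ : ι → E) (hB : Orthonormal ℂ Ψ) (v : E) :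
    ∑ i, ‖⟪Ψ i, v⟫‖ ^ 2 = ‖v‖ ^ 2 := by
  classical
  let b := basisOfLinearIndependentOfCardEqFinrank hB.linearIndependent h
  have hb : ⇑b = Ψ := coe_basisOfLinearIndependentOfCardEqFinrank _ _
  let O : OrthonormalBasis ι ℂ E := b.toOrthonormalBasis (by rwa [hb])
  have hO : ∀ i, O i = Ψ i := by
    intro i
    simp [O, Module.Basis.coe_toOrthonormalBasis, hb]
  have h1 : ‖O.repr v‖ ^ 2 = ‖v‖ ^ 2 := by rw [O.repr.norm_map]
  rw [← h1, PiLp.norm_sq_eq_of_L2]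
  exact Finset.sum_congr rfl fun i _ => by rw [O.repr_apply_apply, hO]

lemma key_sum {n : ℕ} {D : Fin n → ℕ} (hD : ∀ r, 2 ≤ D r)
    (ψ : Fin (∏ r, D r) → (r : Fin n) → EuclideanSpace ℂ (Fin (D r)))
    (hψ : ∀ i r, ‖ψ i r‖ = 1)
    (hB : Orthonormal ℂ (fun i => eprodPi (ψ i)))
    (μ : (r : Fin n) → EuclideanSpace ℂ (Fin (D r)))
    (hμ : ∀ r, ‖μ r‖ = 1)
    (P : Fin n → Prop) [DecidablePred P] :
    ∑ i, ∏ r, (if P r then (D r : ℝ) * ‖⟪ψ i r, μ r⟫‖ ^ 2 else 1)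
      = ((∏ r, D r : ℕ) : ℝ) := by
  classical
  have hdpos : 0 < ∏ r, D r := Finset.prod_pos fun r _ => lt_of_lt_of_le two_pos (hD r)
  haveI : Nonempty (Fin (∏ r, D r)) := Fin.pos_iff_nonempty.mp hdpos
  have hcard : Fintype.card (Fin (∏ r, D r))
      = Module.finrank ℂ (EuclideanSpace ℂ ((r : Fin n) → Fin (D r))) := by
    simp [finrank_euclideanSpace, Fintype.card_pi]
  set v : ((s : Fin n) → Fin (D s)) → EuclideanSpace ℂ ((r : Fin n) → Fin (D r)) :=
    fun f => eprodPi (fun s => if P s then μ s else EuclideanSpace.single (f s) (1 : ℂ)) with hv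
  have hnorm : ∀ f, ‖v f‖ ^ 2 = 1 := by
    intro f
    rw [hv, norm_eprodPi_sq]
    refine Finset.prod_eq_one fun s _ => ?_
    split_ifs with h
    · rw [hμ s]; norm_num
    · rw [EuclideanSpace.norm_single]; norm_num
  have key : ∑ f : (s : Fin n) → Fin (D s), ∑ i, ‖⟪eprodPi (ψ i), v f⟫‖ ^ 2
      = ∑ f : (s : Fin n) → Fin (D s), ‖v f‖ ^ 2 :=
    Finset.sum_congr rfl fun f _ => parseval_aux hcard _ hB (v f)
  have hrhs : ∑ f : (s : Fin n) → Fin (D s), ‖v f‖ ^ 2 = ((∏ r, D r : ℕ) : ℝ) := by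
    simp [hnorm, Fintype.card_pi]
  rw [hrhs, Finset.sum_comm] at key
  rw [← key]
  refine Finset.sum_congr rfl fun i _ => ?_
  have hterm : ∀ f : (s : Fin n) → Fin (D s), ‖⟪eprodPi (ψ i), v f⟫‖ ^ 2
      = ∏ s, (if P s then ‖⟪ψ i s, μ s⟫‖ ^ 2 else ‖ψ i s (f s)‖ ^ 2) := by
    intro f
    rw [hv, norm_inner_eprodPi_sq]
    refine Finset.prod_congr rfl fun s _ => ?_
    split_ifs with h
    · rfl
    · rw [EuclideanSpace.inner_single_right, one_mul, RCLike.norm_conj]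
  calc ∏ r, (if P r then (D r : ℝ) * ‖⟪ψ i r, μ r⟫‖ ^ 2 else 1)
      = ∏ s, ∑ k : Fin (D s), (if P s then ‖⟪ψ i s, μ s⟫‖ ^ 2 else ‖ψ i s k‖ ^ 2) := by
        refine Finset.prod_congr rfl fun s _ => ?_
        split_ifs with h
        · simp [Finset.sum_const, Finset.card_univ, mul_comm]
        · have h2 : ‖ψ i s‖ ^ 2 = ∑ k, ‖ψ i s k‖ ^ 2 := PiLp.norm_sq_eq_of_L2 _ _
          rw [hψ i s, one_pow] at h2
          exact h2
    _ = ∑ f : (s : Fin n) → Fin (D s), ∏ s,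
          (if P s then ‖⟪ψ i s, μ s⟫‖ ^ 2 else ‖ψ i s (f s)‖ ^ 2) := Fintype.prod_sum _
    _ = ∑ f : (s : Fin n) → Fin (D s), ‖⟪eprodPi (ψ i), v f⟫‖ ^ 2 :=
        Finset.sum_congr rfl fun f _ => (hterm f).symm


/-- A product state `μ¹ ⊗ ⋯ ⊗ μⁿ` is mutually unbiased to an orthonormal product basis
`{ψᵢ¹ ⊗ ⋯ ⊗ ψᵢⁿ : i = 1…d}` of `ℂ^{d₁} ⊗ ⋯ ⊗ ℂ^{d_n}`, `d = d₁⋯d_n`, if and only if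
for each `r` and each `i`, `|⟨ψᵢʳ, μʳ⟩|² = 1/d_r`. -/
theorem product_state_MU_multipartite_product_basis_iff {n : ℕ} {D : Fin n → ℕ}
    (hD : ∀ r, 2 ≤ D r)
    (ψ : Fin (∏ r, D r) → (r : Fin n) → EuclideanSpace ℂ (Fin (D r)))
    (hψ : ∀ i r, ‖ψ i r‖ = 1)
    (hB : Orthonormal ℂ (fun i => eprodPi (ψ i)))
    (μ : (r : Fin n) → EuclideanSpace ℂ (Fin (D r)))
    (hμ : ∀ r, ‖μ r‖ = 1) :
    (∀ i, ‖⟪eprodPi (ψ i), eprodPi μ⟫‖ ^ 2 = 1 / ((∏ r, D r : ℕ) : ℝ)) ↔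
      (∀ r i, ‖⟪ψ i r, μ r⟫‖ ^ 2 = 1 / (D r : ℝ)) := by
  classical
  have hdpos : 0 < ∏ r, D r := Finset.prod_pos fun r _ => lt_of_lt_of_le two_pos (hD r)
  have hdR : (0:ℝ) < ((∏ r, D r : ℕ) : ℝ) := by exact_mod_cast hdpos
  have hDrR : ∀ r, (0:ℝ) < (D r : ℝ) := fun r => by
    have := hD r; exact_mod_cast lt_of_lt_of_le two_pos this
  have hcast : ∏ r, (1:ℝ) / (D r : ℝ) = 1 / ((∏ r, D r : ℕ) : ℝ) := by
    rw [Nat.cast_prod, Finset.prod_div_distrib, Finset.prod_const_one]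
  constructor
  · intro h r i0
    set d' : ℝ := ((∏ r, D r : ℕ) : ℝ) with hd'
    set a : Fin (∏ r, D r) → ℝ := fun i => ‖⟪ψ i r, μ r⟫‖ ^ 2 with ha
    have hfact : ∀ i, ∏ s, ‖⟪ψ i s, μ s⟫‖ ^ 2 = 1 / d' := fun i => by
      rw [← norm_inner_eprodPi_sq]; exact h i
    have hpos : ∀ i, 0 < a i := by
      intro i
      rcases lt_or_eq_of_le (by positivity : (0:ℝ) ≤ a i) with h' | h'
      · exact h'
      · exfalso
        have h2 := hfact i
        rw [Finset.prod_eq_zero (Finset.mem_univ r) h'.symm] at h2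
        have : (0:ℝ) < 1 / d' := by positivity
        rw [← h2] at this
        exact lt_irrefl 0 this
    -- S1 : ∑ a i = d' / D r
    have S1 := key_sum hD ψ hψ hB μ hμ (fun s => s = r)
    simp only [Finset.prod_ite_eq', Finset.mem_univ, if_true] at S1
    have S1' : ∑ i, a i = d' / (D r : ℝ) := by
      rw [eq_div_iff (ne_of_gt (hDrR r)), Finset.sum_mul, hd']
      rw [← S1]
      exact Finset.sum_congr rfl fun i _ => by ring
    -- S2 : ∑ 1 / a i = d' * D r
    have S2 := key_sum hD ψ hψ hB μ hμ (fun s => s ≠ r)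
    have hterm2 : ∀ i, ∏ s, (if s ≠ r then (D s : ℝ) * ‖⟪ψ i s, μ s⟫‖ ^ 2 else 1)
        = 1 / ((D r : ℝ) * a i) := by
      intro i
      set g : Fin n → ℝ := fun s => (D s : ℝ) * ‖⟪ψ i s, μ s⟫‖ ^ 2 with hg
      have h1 : ∏ s, (if s ≠ r then g s else 1) = ∏ s ∈ Finset.univ.erase r, g s := by
        rw [← Finset.prod_erase Finset.univ
          (f := fun s => if s ≠ r then g s else 1) (a := r) (by simp)]
        exact Finset.prod_congr rfl fun s hs => if_pos (Finset.ne_of_mem_erase hs)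
      have h2 : (∏ s ∈ Finset.univ.erase r, g s) * g r = ∏ s, g s :=
        Finset.prod_erase_mul Finset.univ g (Finset.mem_univ r)
      have h3 : ∏ s, g s = 1 := by
        rw [hg]
        rw [Finset.prod_mul_distrib, hfact i, hd', Nat.cast_prod]
        have hp : (0:ℝ) < ∏ s, (D s : ℝ) := Finset.prod_pos fun s _ => hDrR s
        field_simp
      have hgr : g r = (D r : ℝ) * a i := rfl
      rw [h1, eq_div_iff (ne_of_gt (mul_pos (hDrR r) (hpos i))), ← hgr, h2, h3]
    rw [Finset.sum_congr rfl fun i _ => hterm2 i] at S2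
    have S2' : ∑ i, 1 / a i = d' * (D r : ℝ) := by
      have hsplit : ∑ i, 1 / ((D r : ℝ) * a i) = (1 / (D r : ℝ)) * ∑ i, 1 / a i := by
        rw [Finset.mul_sum]
        exact Finset.sum_congr rfl fun i _ => by
          rw [one_div_mul_eq_div, div_div]
          ring_nf
      rw [hsplit, ← hd'] at S2
      have hne : (D r : ℝ) ≠ 0 := ne_of_gt (hDrR r)
      field_simp at S2
      linarith [S2]
    -- sum of nonneg terms equals zero
    have hq : ∑ i, (a i - 1 / (D r : ℝ)) ^ 2 / a i = 0 := by
      have expand : ∀ i, (a i - 1 / (D r : ℝ)) ^ 2 / a i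
          = a i - 2 * (1 / (D r : ℝ)) + (1 / (D r : ℝ)) ^ 2 * (1 / a i) := by
        intro i
        have hai := hpos i
        have hne : (D r : ℝ) ≠ 0 := ne_of_gt (hDrR r)
        field_simp
        ring
      rw [Finset.sum_congr rfl fun i _ => expand i, Finset.sum_add_distrib,
        Finset.sum_sub_distrib, S1', Finset.sum_const, ← Finset.mul_sum, S2',
        Finset.card_univ, Fintype.card_fin]
      have hne : (D r : ℝ) ≠ 0 := ne_of_gt (hDrR r)
      have hcd : ((∏ r, D r : ℕ) : ℝ) = d' := rfl
      rw [nsmul_eq_mul, hcd]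
      field_simp
      ring
    have hzero : (a i0 - 1 / (D r : ℝ)) ^ 2 / a i0 = 0 := by
      have := (Finset.sum_eq_zero_iff_of_nonneg
        (fun i _ => by positivity : ∀ i ∈ Finset.univ, 0 ≤ (a i - 1 / (D r : ℝ)) ^ 2 / a i)).mp
        hq i0 (Finset.mem_univ i0)
      exact this
    have : (a i0 - 1 / (D r : ℝ)) ^ 2 = 0 := by
      rcases div_eq_zero_iff.mp hzero with h' | h'
      · exact h'
      · exact absurd h' (ne_of_gt (hpos i0))
    have := pow_eq_zero_iff (n := 2) (by norm_num) |>.mp this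
    have := sub_eq_zero.mp this
    exact this
  · intro h i
    rw [norm_inner_eprodPi_sq, Finset.prod_congr rfl fun r _ => h r i, hcast]
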